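/- arXiv:1206.4216 — 2 statements merged into one kernel-verified Lean document; each statement's English description precedes it below -/
import Mathlib

section
/- Let T be a finite tree whose edges are colored with n colors such that (a) for each color, the edges of that color form a path in T, and (b) every vertex of degree 3 has two incident edges of the same color, and every vertex of degree 4 has its four incident edges in two monochromatic pairs. If T has k₁ leaves among a distinguished set and uses exactly n₁ colors, then T has at least n₁ + k₁ - 2 edges. -/
open Finset SimpleGraph

private lemma aux_mem_edge_of_mem_support {V : Type*} {G : SimpleGraph V} {u w v : V}
    (p : G.Walk u w) (hlen : 0 < p.length) (hv : v ∈ p.support) :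
    ∃ e ∈ p.edges, v ∈ e := by
  induction p with
  | nil => simp at hlen
  | @cons a b c h q ih =>
    rw [SimpleGraph.Walk.support_cons, List.mem_cons] at hv
    rcases hv with rfl | hv
    · exact ⟨s(v, b), by simp, by simp⟩
    · cases q with
      | nil =>
        simp only [SimpleGraph.Walk.support_nil, List.mem_singleton] at hv
        subst hv
        exact ⟨s(a, v), by simp, by simp⟩
      | cons h' q' =>
        obtain ⟨e, he, hve⟩ := ih (by simp) hv
        exact ⟨e, by rw [SimpleGraph.Walk.edges_cons]; exact List.mem_cons_of_mem _ he, hve⟩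

private lemma aux_mem_support_of_mem_edge {V : Type*} {G : SimpleGraph V} {u w v : V}
    (p : G.Walk u w) {e : Sym2 V} (he : e ∈ p.edges) (hve : v ∈ e) : v ∈ p.support := by
  induction e with
  | _ x y =>
    rw [Sym2.mem_iff] at hve
    rcases hve with rfl | rfl
    · exact p.fst_mem_support_of_mem_edges he
    · exact p.snd_mem_support_of_mem_edges he

private lemma aux_two_le {V : Type*} [Fintype V] [DecidableEq V] {G : SimpleGraph V}
    {u w : V} (p : G.Walk u w) (hp : p.IsPath) (hlen : 0 < p.length) :
    2 ≤ (Finset.univ.filter fun v =>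
        (p.edges.toFinset.filter fun e => v ∈ e).card = 1).card := by
  set f : V → ℕ := fun v => (p.edges.toFinset.filter fun e => v ∈ e).card with hf
  have hEcard : p.edges.toFinset.card = p.length := by
    rw [List.toFinset_card_of_nodup hp.isTrail.edges_nodup, SimpleGraph.Walk.length_edges]
  -- total sum of f is 2 * length
  have hsum : ∑ v, f v = 2 * p.length := by
    simp only [hf, Finset.card_filter]
    rw [Finset.sum_comm]
    have h2 : ∀ e ∈ p.edges.toFinset, (∑ v : V, if v ∈ e then (1:ℕ) else 0) = 2 := by
      intro e he
      have heE : e ∈ G.edgeSet := p.edges_subset_edgeSet (List.mem_toFinset.mp he)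
      induction e with
      | _ x y =>
        have hxy : x ≠ y := G.ne_of_adj heE
        rw [← Finset.card_filter]
        have : (Finset.univ.filter fun v => v ∈ s(x,y)) = {x, y} := by
          ext v; simp [Sym2.mem_iff]
        rw [this, Finset.card_pair hxy]
    rw [Finset.sum_congr rfl h2, Finset.sum_const, hEcard, smul_eq_mul, mul_comm]
  -- f ≥ 1 on support
  have hfs : ∀ v ∈ p.support.toFinset, 1 ≤ f v := by
    intro v hv
    obtain ⟨e, he, hve⟩ := aux_mem_edge_of_mem_support p hlen (List.mem_toFinset.mp hv)
    have : e ∈ p.edges.toFinset.filter fun e => v ∈ e := by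
      simp [List.mem_toFinset.mpr he, hve]
    exact Finset.card_pos.mpr ⟨e, this⟩
  have hScard : p.support.toFinset.card = p.length + 1 := by
    rw [List.toFinset_card_of_nodup hp.support_nodup, SimpleGraph.Walk.length_support]
  set S := p.support.toFinset with hS
  set m := (S.filter fun v => f v = 1).card with hm
  have key : ∑ v ∈ S, ((if f v = 1 then 1 else 2) : ℕ) + m = 2 * S.card := by
    calc ∑ v ∈ S, ((if f v = 1 then 1 else 2) : ℕ) + m
        = ∑ v ∈ S, (((if f v = 1 then 1 else 2) : ℕ) + if f v = 1 then 1 else 0) := by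
          rw [hm, Finset.card_filter, Finset.sum_add_distrib]
      _ = ∑ _v ∈ S, 2 :=
          Finset.sum_congr rfl (fun v _ => by by_cases h : f v = 1 <;> simp [h])
      _ = 2 * S.card := by rw [Finset.sum_const, smul_eq_mul, mul_comm]
  have hle : ∑ v ∈ S, ((if f v = 1 then 1 else 2) : ℕ) ≤ ∑ v ∈ S, f v := by
    apply Finset.sum_le_sum
    intro v hv
    have := hfs v hv
    split <;> omega
  have hle2 : ∑ v ∈ S, f v ≤ ∑ v, f v :=
    Finset.sum_le_sum_of_subset (Finset.subset_univ S)
  have hmA : m ≤ (Finset.univ.filter fun v => f v = 1).card :=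
    Finset.card_le_card (Finset.filter_subset_filter _ (Finset.subset_univ S))
  have h2m : 2 ≤ m := by
    have hfin : 2 * (p.length + 1) ≤ 2 * p.length + m := by
      calc 2 * (p.length + 1) = 2 * S.card := by rw [hScard]
        _ = ∑ v ∈ S, ((if f v = 1 then 1 else 2) : ℕ) + m := key.symm
        _ ≤ ∑ v ∈ S, f v + m := add_le_add_left hle m
        _ ≤ ∑ v, f v + m := add_le_add_left hle2 m
        _ = 2 * p.length + m := by rw [hsum]
    omega
  exact h2m.trans hmA
/-- Counting fact for colored trees: let `T` be a finite tree whose edges are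
colored with colors in `Fin n` such that (a) for every color in use, the edges
of that color form a path, and (b) every vertex of degree 3 has two incident
edges of the same color, and every vertex of degree 4 has its four incident
edges in two monochromatic pairs (of distinct colors). If `T` has `k₁` leaves
and uses exactly `n₁` colors, then `T` has at least `n₁ + k₁ - 2` edges. -/
theorem stmt_7 {V : Type*} [Fintype V] [DecidableEq V] (G : SimpleGraph V)
    [DecidableRel G.Adj] (hT : G.IsTree) (n : ℕ) (t : Sym2 V → Fin n)
    (hdeg4 : ∀ v, G.degree v ≤ 4)
    (hpath : ∀ c : Fin n, (∃ e ∈ G.edgeSet, t e = c) →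
      ∃ (u v : V) (p : G.Walk u v), p.IsPath ∧
        ∀ e : Sym2 V, (e ∈ G.edgeSet ∧ t e = c) ↔ e ∈ p.edges)
    (hdeg3 : ∀ v, G.degree v = 3 →
      ∃ e₁ e₂ : Sym2 V, e₁ ≠ e₂ ∧ e₁ ∈ G.incidenceSet v ∧
        e₂ ∈ G.incidenceSet v ∧ t e₁ = t e₂)
    (hdeg4' : ∀ v, G.degree v = 4 →
      ∃ c₁ c₂ : Fin n, c₁ ≠ c₂ ∧
        ((G.incidenceFinset v).filter fun e => t e = c₁).card = 2 ∧
        ((G.incidenceFinset v).filter fun e => t e = c₂).card = 2) :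
    (G.edgeFinset.image t).card + (Finset.univ.filter fun v => G.degree v = 1).card
      ≤ G.edgeFinset.card + 2 := by
  set cnt : V → Fin n → ℕ :=
    fun v c => ((G.incidenceFinset v).filter fun e => t e = c).card with hcntdef
  -- Step 1: each used color has at least two "endpoint" vertices
  have hcolor : ∀ c ∈ G.edgeFinset.image t,
      2 ≤ (Finset.univ.filter fun v => cnt v c = 1).card := by
    intro c hc
    obtain ⟨e₀, he₀, hte₀⟩ := Finset.mem_image.mp hc
    obtain ⟨u, w, p, hp, hchar⟩ := hpath c ⟨e₀, SimpleGraph.mem_edgeFinset.mp he₀, hte₀⟩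
    have he₀p : e₀ ∈ p.edges := (hchar e₀).mp ⟨SimpleGraph.mem_edgeFinset.mp he₀, hte₀⟩
    have hlen : 0 < p.length := by
      rw [← SimpleGraph.Walk.length_edges]
      exact List.length_pos_iff.mpr (List.ne_nil_of_mem he₀p)
    have hcnteq : ∀ v, cnt v c = (p.edges.toFinset.filter fun e => v ∈ e).card := by
      intro v
      have : ((G.incidenceFinset v).filter fun e => t e = c)
          = p.edges.toFinset.filter fun e => v ∈ e := by
        ext e
        simp only [Finset.mem_filter, SimpleGraph.mem_incidenceFinset,
          SimpleGraph.incidenceSet, Set.mem_setOf_eq, List.mem_toFinset]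
        constructor
        · rintro ⟨⟨heS, hve⟩, htc⟩
          exact ⟨(hchar e).mp ⟨heS, htc⟩, hve⟩
        · rintro ⟨hep, hve⟩
          obtain ⟨heS, htc⟩ := (hchar e).mpr hep
          exact ⟨⟨heS, hve⟩, htc⟩
      exact congrArg Finset.card this
    have hset : (Finset.univ.filter fun v => cnt v c = 1)
        = Finset.univ.filter fun v => (p.edges.toFinset.filter fun e => v ∈ e).card = 1 :=
      Finset.filter_congr fun v _ => by rw [hcnteq v]
    rw [hset]
    exact aux_two_le p hp hlen
  -- Step 2: global lower bound by double counting
  have hlow : 2 * (G.edgeFinset.image t).card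
      ≤ ∑ v, (Finset.univ.filter fun c => cnt v c = 1).card := by
    calc 2 * (G.edgeFinset.image t).card
        = ∑ _c ∈ G.edgeFinset.image t, 2 := by
          rw [Finset.sum_const, smul_eq_mul, mul_comm]
      _ ≤ ∑ c ∈ G.edgeFinset.image t, (Finset.univ.filter fun v => cnt v c = 1).card :=
          Finset.sum_le_sum hcolor
      _ ≤ ∑ c : Fin n, (Finset.univ.filter fun v => cnt v c = 1).card :=
          Finset.sum_le_sum_of_subset (Finset.subset_univ _)
      _ = ∑ v, (Finset.univ.filter fun c => cnt v c = 1).card := by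
          simp only [Finset.card_filter]
          rw [Finset.sum_comm]
  -- Step 3: at each vertex, the color-counts sum to the degree
  have hdegsum : ∀ v, ∑ c : Fin n, cnt v c = G.degree v := by
    intro v
    rw [← SimpleGraph.card_incidenceFinset_eq_degree]
    exact (Finset.card_eq_sum_card_fiberwise fun e _ => Finset.mem_univ (t e)).symm
  -- Step 4: per-vertex upper bound on the number of "endpoint" colors
  have hends : ∀ v, (Finset.univ.filter fun c => cnt v c = 1).card
      ≤ if G.degree v = 3 then 1 else if G.degree v = 4 then 0 else G.degree v := by
    intro v
    have hsub : ∀ s : Finset (Fin n), (Finset.univ.filter fun c => cnt v c = 1) ⊆ s →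
        (Finset.univ.filter fun c => cnt v c = 1).card ≤ ∑ c ∈ s, cnt v c := by
      intro s hs
      calc (Finset.univ.filter fun c => cnt v c = 1).card
          = ∑ c ∈ Finset.univ.filter fun c => cnt v c = 1, cnt v c :=
            (Finset.card_eq_sum_ones _).trans
              (Finset.sum_congr rfl fun c hc => ((Finset.mem_filter.mp hc).2).symm)
        _ ≤ ∑ c ∈ s, cnt v c := Finset.sum_le_sum_of_subset hs
    by_cases h3 : G.degree v = 3
    · rw [if_pos h3]
      obtain ⟨e₁, e₂, hne, hi₁, hi₂, htt⟩ := hdeg3 v h3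
      have hcnt2 : 2 ≤ cnt v (t e₁) := by
        have hss : {e₁, e₂} ⊆ (G.incidenceFinset v).filter fun e => t e = t e₁ := by
          intro e he
          rcases Finset.mem_insert.mp he with rfl | he
          · exact Finset.mem_filter.mpr ⟨by rwa [SimpleGraph.mem_incidenceFinset], rfl⟩
          · rw [Finset.mem_singleton] at he; subst he
            exact Finset.mem_filter.mpr ⟨by rwa [SimpleGraph.mem_incidenceFinset], htt.symm⟩
        calc 2 = ({e₁, e₂} : Finset (Sym2 V)).card := (Finset.card_pair hne).symm
          _ ≤ _ := Finset.card_le_card hss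
      have hsubs : (Finset.univ.filter fun c => cnt v c = 1)
          ⊆ Finset.univ.erase (t e₁) := by
        intro c hc
        refine Finset.mem_erase.mpr ⟨?_, Finset.mem_univ c⟩
        rintro rfl
        have := (Finset.mem_filter.mp hc).2
        omega
      have h1 := hsub _ hsubs
      have hsum' : ∑ c ∈ Finset.univ.erase (t e₁), cnt v c + cnt v (t e₁) = G.degree v := by
        rw [Finset.sum_erase_add _ _ (Finset.mem_univ (t e₁)), hdegsum v]
      omega
    by_cases h4 : G.degree v = 4
    · rw [if_neg h3, if_pos h4]
      obtain ⟨c₁, c₂, hcne, hcc₁, hcc₂⟩ := hdeg4' v h4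
      have hc1 : cnt v c₁ = 2 := hcc₁
      have hc2 : cnt v c₂ = 2 := hcc₂
      have hsubs : (Finset.univ.filter fun c => cnt v c = 1)
          ⊆ Finset.univ \ {c₁, c₂} := by
        intro c hc
        have h1 := (Finset.mem_filter.mp hc).2
        refine Finset.mem_sdiff.mpr ⟨Finset.mem_univ c, ?_⟩
        intro hmem
        rcases Finset.mem_insert.mp hmem with rfl | hm
        · omega
        · rw [Finset.mem_singleton] at hm; subst hm; omega
      have h1 := hsub _ hsubs
      have hsd : ∑ c ∈ Finset.univ \ {c₁, c₂}, cnt v c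
          + ∑ c ∈ ({c₁, c₂} : Finset (Fin n)), cnt v c = ∑ c, cnt v c :=
        Finset.sum_sdiff (Finset.subset_univ _)
      rw [Finset.sum_pair hcne, hdegsum v, h4, hc1, hc2] at hsd
      omega
    · rw [if_neg h3, if_neg h4]
      calc (Finset.univ.filter fun c => cnt v c = 1).card
          ≤ ∑ c, cnt v c := hsub _ (Finset.subset_univ _)
        _ = G.degree v := hdegsum v
  -- Step 5: fiberwise sums over degrees
  have hmaps : ∀ v : V, v ∈ Finset.univ → G.degree v ∈ Finset.range 5 :=
    fun v _ => Finset.mem_range.mpr (Nat.lt_succ_of_le (hdeg4 v))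
  have hfib : ∀ F : ℕ → ℕ, ∑ v, F (G.degree v)
      = ∑ i ∈ Finset.range 5,
          F i * (Finset.univ.filter fun v => G.degree v = i).card := by
    intro F
    rw [← Finset.sum_fiberwise_of_maps_to hmaps fun v => F (G.degree v)]
    refine Finset.sum_congr rfl fun i _ => ?_
    calc ∑ v ∈ Finset.univ.filter fun v => G.degree v = i, F (G.degree v)
        = ∑ v ∈ Finset.univ.filter fun v => G.degree v = i, F i :=
          Finset.sum_congr rfl fun v hv => by rw [(Finset.mem_filter.mp hv).2]
      _ = F i * _ := by rw [Finset.sum_const, smul_eq_mul, mul_comm]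
  have hEnds : ∑ v, (Finset.univ.filter fun c => cnt v c = 1).card
      ≤ ∑ v, (if G.degree v = 3 then 1 else if G.degree v = 4 then 0 else G.degree v) :=
    Finset.sum_le_sum fun v _ => hends v
  have h2 := hfib fun i => if i = 3 then 1 else if i = 4 then 0 else i
  have h1 := hfib fun i => i
  have h0 := hfib fun _ => 1
  simp only [Finset.sum_range_succ, Finset.range_zero, Finset.sum_empty] at h2 h1 h0
  norm_num at h2 h1 h0
  have hdegE : ∑ v, G.degree v = 2 * G.edgeFinset.card := G.sum_degrees_eq_twice_card_edges
  have hcardV : G.edgeFinset.card + 1 = Fintype.card V := hT.card_edgeFinset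
  omega
end

section
/- Let A₁, A₂, A₃ be finite subsets of ℤ^d (d ≥ 5) all contained in a ball B(0, cR), and suppose g(y,z) ≥ c₀ R^{2-d} for all y, z ∈ B(0, cR), where g is the Green's function of simple random walk. Then for every x ∈ A₃, the probability that a simple random walk started at x hits A₁ and afterwards hits A₂ satisfies P_x[H_{A₁} ≤ H_{A₂} ∘ θ < ∞] ≥ c₀² R^{2(2-d)} cap(A₁) cap(A₂). -/
/-- The `l¹` (graph) distance on `ℤ^d`. -/
def latZ {d : ℕ} (x y : Fin d → ℤ) : ℤ := ∑ i, |x i - y i|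

/-- A finite path in `ℤ^d` is good if all its steps are nearest-neighbor. -/
def goodPath {d N : ℕ} (g : Fin (N + 1) → Fin d → ℤ) : Prop :=
  ∀ i : Fin N, latZ (g i.castSucc) (g i.succ) = 1

open Classical in
/-- Probability that the first `N` steps of simple random walk started at `x`
form a path satisfying `E`: each nearest-neighbor path of length `N` has
probability `(2d)^{-N}`. -/
noncomputable def pathProb (d : ℕ) (x : Fin d → ℤ) (N : ℕ)
    (E : (Fin (N + 1) → Fin d → ℤ) → Prop) : ℝ :=
  ∑' f : Fin N → Fin d → ℤ,
    if goodPath (Fin.cons x f) ∧ E (Fin.cons x f) then ((2 * d : ℝ))⁻¹ ^ N else 0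

/-- Probability of a monotone event for simple random walk started at `x`,
as the supremum over time horizons `N` of the finite-horizon probabilities. -/
noncomputable def eventProb (d : ℕ) (x : Fin d → ℤ)
    (E : ∀ N : ℕ, (Fin (N + 1) → Fin d → ℤ) → Prop) : ℝ :=
  ⨆ N : ℕ, pathProb d x N (E N)

/-- `P_x[H_A < ∞]`: probability that SRW from `x` ever enters `A`. -/
noncomputable def hitProb (d : ℕ) (A : Set (Fin d → ℤ)) (x : Fin d → ℤ) : ℝ :=
  eventProb d x fun _ g => ∃ i, g i ∈ A

/-- `P_x[H̃_A < ∞]`: probability that SRW from `x` enters `A` at some time `≥ 1`. -/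
noncomputable def returnProb (d : ℕ) (A : Set (Fin d → ℤ)) (x : Fin d → ℤ) : ℝ :=
  eventProb d x fun _ g => ∃ i, i ≠ 0 ∧ g i ∈ A

open Classical in
/-- The equilibrium measure `e_A(x) = P_x[H̃_A = ∞] 1_{x ∈ A}`. -/
noncomputable def eqMeasure (d : ℕ) (A : Set (Fin d → ℤ)) (x : Fin d → ℤ) : ℝ :=
  if x ∈ A then 1 - returnProb d A x else 0

/-- The capacity `cap(A) = ∑_{z ∈ A} e_A(z)` of a finite set. -/
noncomputable def capacity (d : ℕ) (A : Finset (Fin d → ℤ)) : ℝ :=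
  ∑ z ∈ A, eqMeasure d (↑A) z

/-- `P_x[X_n = y]`: the `n`-step transition probability. -/
noncomputable def heatKernel (d n : ℕ) (x y : Fin d → ℤ) : ℝ :=
  pathProb d x n fun g => g (Fin.last n) = y

/-- The Green's function `g(x,y) = ∑_{n ≥ 0} P_x[X_n = y]`. -/
noncomputable def green (d : ℕ) (x y : Fin d → ℤ) : ℝ :=
  ∑' n : ℕ, heatKernel d n x y

/-- Probability that SRW from `x` visits `A₁` at some time and `A₂` at some
(weakly) later time. -/
noncomputable def hitThenProb (d : ℕ) (A₁ A₂ : Set (Fin d → ℤ))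
    (x : Fin d → ℤ) : ℝ :=
  eventProb d x fun N g => ∃ i j : Fin (N + 1), i ≤ j ∧ g i ∈ A₁ ∧ g j ∈ A₂

/-- Probability that SRW from `x` visits the points `z 0, ..., z (m-1)` in that
order (at weakly increasing times). -/
noncomputable def orderedVisitProb (d : ℕ) (x : Fin d → ℤ) {m : ℕ}
    (z : Fin m → Fin d → ℤ) : ℝ :=
  eventProb d x fun N g =>
    ∃ t : Fin m → Fin (N + 1), Monotone t ∧ ∀ i, g (t i) = z i

namespace SRWaux
variable {d : ℕ}

abbrev V (d : ℕ) := Fin d → ℤ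

def Step (d : ℕ) := {v : V d // latZ v 0 = 1}

lemma latZ_single (i : Fin d) (c : ℤ) : latZ (Pi.single i c) 0 = |c| := by
  classical
  simp only [latZ, Pi.zero_apply, sub_zero]
  rw [Finset.sum_congr rfl (g := fun j => if j = i then |c| else 0)]
  · simp
  · intro j _
    by_cases h : j = i <;> simp [Pi.single_apply, h]

lemma step_classify (v : V d) (h : latZ v 0 = 1) :
    ∃ i : Fin d, ∃ b : Bool, v = Pi.single i (if b then 1 else (-1 : ℤ)) := by
  classical
  have h' : ∑ i, |v i| = 1 := by simpa [latZ] using h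
  have hex : ∃ i, v i ≠ 0 := by
    by_contra hc
    push_neg at hc
    simp [hc] at h'
  obtain ⟨i, hi⟩ := hex
  have h1 : 1 ≤ |v i| := Int.one_le_abs hi
  have hsplit := Finset.add_sum_erase Finset.univ (fun j => |v j|) (Finset.mem_univ i)
  rw [h'] at hsplit
  have hnn : 0 ≤ ∑ j ∈ Finset.univ.erase i, |v j| :=
    Finset.sum_nonneg fun j _ => abs_nonneg _
  have hrest : ∑ j ∈ Finset.univ.erase i, |v j| = 0 := by linarith
  have hzero : ∀ j ≠ i, v j = 0 := by
    intro j hj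
    have := (Finset.sum_eq_zero_iff_of_nonneg (fun j _ => abs_nonneg (v j))).mp hrest j
      (Finset.mem_erase.mpr ⟨hj, Finset.mem_univ j⟩)
    exact abs_eq_zero.mp this
  have habs : |v i| = 1 := by linarith
  rcases (abs_eq (by norm_num : (0:ℤ) ≤ 1)).mp habs with hv | hv
  · exact ⟨i, true, by funext j; by_cases hji : j = i <;>
      simp [Pi.single_apply, hji, hv, hzero j]⟩
  · exact ⟨i, false, by funext j; by_cases hji : j = i <;>
      simp [Pi.single_apply, hji, hv, hzero j]⟩

def stepEmb (d : ℕ) : Fin d × Bool → Step d := fun p =>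
  ⟨Pi.single p.1 (if p.2 then 1 else -1), by
    rw [latZ_single]; cases hb : p.2 <;> norm_num⟩

lemma stepEmb_bijective : Function.Bijective (stepEmb d) := by
  constructor
  · rintro ⟨i, b⟩ ⟨i', b'⟩ hp
    have h := congrArg Subtype.val hp
    simp only [stepEmb] at h
    have hci : (if b = true then (1:ℤ) else -1) ≠ 0 := by cases b <;> norm_num
    have hi : i = i' := by
      by_contra hne
      have h2 := congrFun h i
      rw [Pi.single_eq_same, Pi.single_eq_of_ne hne] at h2
      exact hci h2
    subst hi
    have h3 := congrFun h i
    rw [Pi.single_eq_same, Pi.single_eq_same] at h3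
    cases b <;> cases b' <;> simp_all
  · rintro ⟨v, hv⟩
    obtain ⟨i, b, hb⟩ := step_classify v hv
    exact ⟨(i, b), by subst hb; rfl⟩

noncomputable instance : Fintype (Step d) := Fintype.ofBijective _ stepEmb_bijective

lemma card_step : Fintype.card (Step d) = 2 * d := by
  rw [← Fintype.card_of_bijective stepEmb_bijective]
  simp [Fintype.card_prod, mul_comm]


/-- position of the walk after `k` steps -/
def pos (x : V d) {N : ℕ} (s : Fin N → Step d) (k : ℕ) : V d :=
  x + ∑ i : Fin N, if (i : ℕ) < k then (s i).1 else 0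

lemma pos_zero (x : V d) {N : ℕ} (s : Fin N → Step d) : pos x s 0 = x := by
  simp [pos]

lemma pos_succ (x : V d) {N : ℕ} (s : Fin N → Step d) {k : ℕ} (hk : k < N) :
    pos x s (k + 1) = pos x s k + (s ⟨k, hk⟩).1 := by
  classical
  have key : ∀ i : Fin N, (if (i : ℕ) < k + 1 then (s i).1 else 0)
      = (if (i : ℕ) < k then (s i).1 else 0) + (if i = ⟨k, hk⟩ then (s i).1 else 0) := by
    intro i
    by_cases h1 : (i : ℕ) < k
    · rw [if_pos (by omega), if_pos h1, if_neg (fun he => by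
        rw [he] at h1; simp at h1), add_zero]
    · by_cases h2 : i = ⟨k, hk⟩
      · have : (i : ℕ) = k := by simpa using congrArg Fin.val h2
        rw [if_pos (by omega), if_neg h1, if_pos h2, zero_add]
      · have : (i : ℕ) ≠ k := fun hh => h2 (Fin.ext hh)
        rw [if_neg (by omega), if_neg h1, if_neg h2, add_zero]
  simp only [pos, Finset.sum_congr rfl (fun i _ => key i), Finset.sum_add_distrib]
  rw [Finset.sum_ite_eq' Finset.univ (⟨k, hk⟩ : Fin N) (fun i => (s i).1)]
  simp [add_assoc]

lemma latZ_sub_zero (a b : V d) : latZ (a - b) 0 = latZ a b := by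
  simp [latZ]

lemma latZ_self_add (a v : V d) : latZ a (a + v) = latZ v 0 := by
  unfold latZ
  apply Finset.sum_congr rfl
  intro i _
  have h : a i - (a i + v i) = -(v i) := by ring
  simp [h]

lemma good_of_steps (x : V d) {N : ℕ} (s : Fin N → Step d) :
    goodPath (fun i : Fin (N + 1) => pos x s (i : ℕ)) := by
  intro i
  have h2 : ((i.succ : Fin (N + 1)) : ℕ) = (i : ℕ) + 1 := rfl
  have h1 : ((i.castSucc : Fin (N + 1)) : ℕ) = (i : ℕ) := rfl
  simp only [h1, h2, pos_succ x s i.isLt, Fin.eta]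
  rw [latZ_self_add]
  exact (s i).2

/-- positions (after the start) determined by steps -/
def Phi (x : V d) {N : ℕ} (s : Fin N → Step d) : Fin N → V d :=
  fun i => pos x s ((i : ℕ) + 1)

lemma cons_Phi (x : V d) {N : ℕ} (s : Fin N → Step d) :
    Fin.cons x (Phi x s) = fun i : Fin (N + 1) => pos x s (i : ℕ) := by
  funext i
  induction i using Fin.cases with
  | zero => simp [pos_zero]
  | succ j => simp [Phi, Fin.cons_succ]

lemma Phi_injective (x : V d) {N : ℕ} : Function.Injective (Phi (N := N) x) := by
  intro s s' h
  have hpos : ∀ k, k ≤ N → pos x s k = pos x s' k := by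
    intro k hk
    match k with
    | 0 => rw [pos_zero, pos_zero]
    | (j + 1) =>
      have hj : j < N := hk
      exact congrFun h ⟨j, hj⟩
  funext i
  apply Subtype.ext
  have e1 := pos_succ x s i.isLt
  have e2 := pos_succ x s' i.isLt
  rw [Fin.eta] at e1 e2
  have : pos x s ((i : ℕ) + 1) = pos x s' ((i : ℕ) + 1) := hpos _ i.isLt
  have h0 : pos x s (i : ℕ) = pos x s' (i : ℕ) := hpos _ (le_of_lt i.isLt)
  rw [e1, e2, h0] at this
  exact add_left_cancel this

lemma Phi_surj (x : V d) {N : ℕ} (f : Fin N → V d) (hf : goodPath (Fin.cons x f)) :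
    ∃ s : Fin N → Step d, Phi x s = f := by
  set g : Fin (N + 1) → V d := Fin.cons x f with hg
  have hstep : ∀ i : Fin N, latZ (g i.succ - g i.castSucc) 0 = 1 := by
    intro i
    rw [latZ_sub_zero]
    have := hf i
    unfold latZ at this ⊢
    rw [← this]
    exact Finset.sum_congr rfl fun j _ => abs_sub_comm _ _
  refine ⟨fun i => ⟨g i.succ - g i.castSucc, hstep i⟩, ?_⟩
  have claim : ∀ k (hk : k ≤ N),
      pos x (fun i => (⟨g i.succ - g i.castSucc, hstep i⟩ : Step d)) k
        = g ⟨k, Nat.lt_succ_of_le hk⟩ := by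
    intro k
    induction k with
    | zero =>
      intro _
      refine (pos_zero x _).trans ?_
      rw [hg]
      rfl
    | succ j ih =>
      intro hk
      have hj : j < N := hk
      refine (pos_succ _ _ hj).trans ?_
      rw [ih (le_of_lt hj)]
      show g ⟨j, _⟩ + (g (⟨j, hj⟩ : Fin N).succ - g (⟨j, hj⟩ : Fin N).castSucc) = _
      have hcs : ((⟨j, hj⟩ : Fin N).castSucc : Fin (N + 1)) = ⟨j, Nat.lt_succ_of_le (le_of_lt hj)⟩ := rfl
      have hsc : ((⟨j, hj⟩ : Fin N).succ : Fin (N + 1)) = ⟨j + 1, Nat.lt_succ_of_le hk⟩ := rfl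
      rw [hcs, hsc]
      abel
  funext i
  show pos x _ ((i : ℕ) + 1) = f i
  rw [claim ((i : ℕ) + 1) i.isLt]
  show g ⟨(i : ℕ) + 1, _⟩ = f i
  have : (⟨(i : ℕ) + 1, Nat.lt_succ_of_le i.isLt⟩ : Fin (N + 1)) = Fin.succ i := by
    rw [Fin.ext_iff]; rfl
  rw [this, hg, Fin.cons_succ]

open Classical in
lemma pathProb_eq (x : V d) (N : ℕ) (E : (Fin (N + 1) → V d) → Prop) :
    pathProb d x N E
      = ∑ s : Fin N → Step d,
          if E (fun i : Fin (N + 1) => pos x s (i : ℕ)) then ((2 * d : ℝ))⁻¹ ^ N else 0 := by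
  classical
  rw [pathProb, tsum_eq_sum (s := Finset.univ.image (Phi x))
    (by
      intro f hf
      rw [if_neg]
      rintro ⟨hgood, -⟩
      obtain ⟨s, hs⟩ := Phi_surj x f hgood
      exact hf (Finset.mem_image.mpr ⟨s, Finset.mem_univ s, hs⟩))]
  rw [Finset.sum_image (fun s _ s' _ h => Phi_injective x h)]
  apply Finset.sum_congr rfl
  intro s _
  apply if_congr _ rfl rfl
  rw [cons_Phi]
  exact and_iff_right (good_of_steps x s)

open Classical in
/-- finite-horizon probability of an event of the (ℕ-indexed) walk path -/
noncomputable def Qp (d : ℕ) (N : ℕ) (x : V d) (P : (ℕ → V d) → Prop) : ℝ :=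
  ∑ s : Fin N → Step d, if P (fun k => pos x s k) then ((2 * d : ℝ))⁻¹ ^ N else 0

lemma w_nonneg (N : ℕ) : (0:ℝ) ≤ ((2 * d : ℝ))⁻¹ ^ N := by positivity

lemma Qp_nonneg (N : ℕ) (x : V d) (P : (ℕ → V d) → Prop) : 0 ≤ Qp d N x P := by
  classical
  apply Finset.sum_nonneg
  intro s _
  by_cases h : P (fun k => pos x s k) <;> simp [Qp, h, w_nonneg]

lemma Qp_congr {N : ℕ} {x : V d} {P P' : (ℕ → V d) → Prop}
    (h : ∀ p, P p ↔ P' p) : Qp d N x P = Qp d N x P' := by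
  classical
  unfold Qp
  exact Finset.sum_congr rfl fun s _ => if_congr (h _) rfl rfl

lemma Qp_mono {N : ℕ} {x : V d} {P P' : (ℕ → V d) → Prop}
    (h : ∀ p, P p → P' p) : Qp d N x P ≤ Qp d N x P' := by
  classical
  apply Finset.sum_le_sum
  intro s _
  by_cases hp : P (fun k => pos x s k)
  · rw [if_pos hp, if_pos (h _ hp)]
  · rw [if_neg hp]
    by_cases hp' : P' (fun k => pos x s k)
    · rw [if_pos hp']; exact w_nonneg N
    · rw [if_neg hp']

lemma Qp_true (hd : 0 < d) (N : ℕ) (x : V d) : Qp d N x (fun _ => True) = 1 := by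
  classical
  have hd' : (0:ℝ) < d := by exact_mod_cast hd
  have h2 : (2 * (d:ℝ)) ≠ 0 := by positivity
  have h1 : Qp d N x (fun _ => True) = ∑ _s : Fin N → Step d, ((2 * d : ℝ))⁻¹ ^ N :=
    Finset.sum_congr rfl fun s _ => if_pos trivial
  rw [h1, Finset.sum_const, Finset.card_univ, Fintype.card_fun, card_step,
    Fintype.card_fin, nsmul_eq_mul]
  push_cast
  rw [← mul_pow, mul_inv_cancel₀ h2, one_pow]

lemma Qp_le_one (hd : 0 < d) (N : ℕ) (x : V d) (P : (ℕ → V d) → Prop) :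
    Qp d N x P ≤ 1 := by
  rw [← Qp_true (d := d) hd N x]
  exact Qp_mono fun _ _ => trivial

lemma Qp_compl (hd : 0 < d) (N : ℕ) (x : V d) (P : (ℕ → V d) → Prop) :
    Qp d N x P = 1 - Qp d N x (fun p => ¬ P p) := by
  classical
  have : Qp d N x P + Qp d N x (fun p => ¬ P p) = 1 := by
    rw [← Qp_true (d := d) hd N x]
    unfold Qp
    rw [← Finset.sum_add_distrib]
    apply Finset.sum_congr rfl
    intro s _
    by_cases h : P (fun k => pos x s k) <;> simp [h]
  linarith

lemma Qp_cast {N M : ℕ} (h : N = M) (x : V d) (P : (ℕ → V d) → Prop) :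
    Qp d N x P = Qp d M x P := by subst h; rfl

/-- concatenation of step sequences -/
def joinSteps {a b : ℕ} (s₁ : Fin a → Step d) (s₂ : Fin b → Step d) :
    Fin (a + b) → Step d :=
  fun i => Sum.elim s₁ s₂ (finSumFinEquiv.symm i)

def joinEquiv (a b : ℕ) : ((Fin a → Step d) × (Fin b → Step d)) ≃ (Fin (a + b) → Step d) :=
  (Equiv.sumArrowEquivProdArrow _ _ _).symm.trans
    (Equiv.arrowCongr finSumFinEquiv (Equiv.refl _))

lemma joinEquiv_apply {a b : ℕ} (s₁ : Fin a → Step d) (s₂ : Fin b → Step d) :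
    joinEquiv a b (s₁, s₂) = joinSteps s₁ s₂ := by
  funext i
  simp [joinEquiv, joinSteps, Equiv.sumArrowEquivProdArrow, Equiv.arrowCongr]

lemma joinSteps_castAdd {a b : ℕ} (s₁ : Fin a → Step d) (s₂ : Fin b → Step d) (i : Fin a) :
    joinSteps s₁ s₂ (Fin.castAdd b i) = s₁ i := by
  simp [joinSteps]

lemma joinSteps_natAdd {a b : ℕ} (s₁ : Fin a → Step d) (s₂ : Fin b → Step d) (j : Fin b) :
    joinSteps s₁ s₂ (Fin.natAdd a j) = s₂ j := by
  simp [joinSteps]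

lemma pos_join (x : V d) {a b : ℕ} (s₁ : Fin a → Step d) (s₂ : Fin b → Step d) (k : ℕ) :
    pos x (joinSteps s₁ s₂) k
      = x + ((∑ i : Fin a, if (i : ℕ) < k then (s₁ i).1 else 0)
          + (∑ j : Fin b, if a + (j : ℕ) < k then (s₂ j).1 else 0)) := by
  unfold pos
  rw [Fin.sum_univ_add]
  congr 1
  congr 1
  · exact Finset.sum_congr rfl fun i _ => by rw [joinSteps_castAdd]; rfl
  · exact Finset.sum_congr rfl fun j _ => by rw [joinSteps_natAdd]; rfl

lemma pos_join_left (x : V d) {a b : ℕ} (s₁ : Fin a → Step d) (s₂ : Fin b → Step d)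
    {k : ℕ} (hk : k ≤ a) :
    pos x (joinSteps s₁ s₂) k = pos x s₁ k := by
  rw [pos_join]
  have h2 : ∀ j : Fin b, (if a + (j : ℕ) < k then (s₂ j).1 else 0) = 0 := fun j =>
    if_neg (by omega)
  rw [Finset.sum_congr rfl fun j _ => h2 j, Finset.sum_const, smul_zero, add_zero]
  rfl

lemma pos_join_right (x : V d) {a b : ℕ} (s₁ : Fin a → Step d) (s₂ : Fin b → Step d)
    (u : ℕ) :
    pos x (joinSteps s₁ s₂) (a + u) = pos (pos x s₁ a) s₂ u := by
  rw [pos_join]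
  have h1 : ∀ i : Fin a, (if (i : ℕ) < a + u then (s₁ i).1 else 0) = (s₁ i).1 := fun i =>
    if_pos (by omega)
  have h2 : ∀ j : Fin b, (a + (j : ℕ) < a + u) ↔ ((j : ℕ) < u) := fun j => by omega
  rw [Finset.sum_congr rfl fun i _ => h1 i]
  unfold pos
  have h3 : ∀ i : Fin a, (if (i : ℕ) < a then (s₁ i).1 else 0) = (s₁ i).1 := fun i =>
    if_pos i.isLt
  rw [Finset.sum_congr rfl fun i _ => h3 i]
  rw [Finset.sum_congr rfl fun j _ => if_congr (h2 j) rfl rfl]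
  abel

open Classical in
lemma Qp_split (a b : ℕ) (x : V d) (P₁ P₂ : (ℕ → V d) → Prop)
    (hP₁ : ∀ p q : ℕ → V d, (∀ k, k ≤ a → p k = q k) → P₁ p → P₁ q) :
    Qp d (a + b) x (fun p => P₁ p ∧ P₂ (fun u => p (a + u)))
      = ∑ s₁ : Fin a → Step d,
          if P₁ (fun k => pos x s₁ k) then
            ((2 * d : ℝ))⁻¹ ^ a * Qp d b (pos x s₁ a) P₂ else 0 := by
  classical
  have key : ∀ (s₁ : Fin a → Step d) (s₂ : Fin b → Step d),
      (P₁ (fun k => pos x (joinEquiv a b (s₁, s₂)) k)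
        ∧ P₂ (fun u => pos x (joinEquiv a b (s₁, s₂)) (a + u)))
      ↔ (P₁ (fun k => pos x s₁ k) ∧ P₂ (fun u => pos (pos x s₁ a) s₂ u)) := by
    intro s₁ s₂
    rw [joinEquiv_apply]
    constructor
    · rintro ⟨h1, h2⟩
      refine ⟨hP₁ _ _ (fun k hk => pos_join_left x s₁ s₂ hk) h1, ?_⟩
      have : (fun u => pos x (joinSteps s₁ s₂) (a + u))
          = (fun u => pos (pos x s₁ a) s₂ u) := funext fun u => pos_join_right x s₁ s₂ u
      rwa [this] at h2
    · rintro ⟨h1, h2⟩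
      refine ⟨hP₁ _ _ (fun k hk => (pos_join_left x s₁ s₂ hk).symm) h1, ?_⟩
      have : (fun u => pos x (joinSteps s₁ s₂) (a + u))
          = (fun u => pos (pos x s₁ a) s₂ u) := funext fun u => pos_join_right x s₁ s₂ u
      rwa [this]
  calc Qp d (a + b) x (fun p => P₁ p ∧ P₂ (fun u => p (a + u)))
      = ∑ pr : (Fin a → Step d) × (Fin b → Step d),
          (if P₁ (fun k => pos x (joinEquiv a b pr) k)
              ∧ P₂ (fun u => pos x (joinEquiv a b pr) (a + u))
            then ((2 * d : ℝ))⁻¹ ^ (a + b) else 0) :=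
        by
        have lhs_eq : (Qp d (a + b) x fun p => P₁ p ∧ P₂ fun u => p (a + u))
            = ∑ s : Fin (a + b) → Step d,
              if (P₁ fun k => pos x s k) ∧ (P₂ fun u => pos x s (a + u))
                then ((2 * d : ℝ))⁻¹ ^ (a + b) else 0 := by
          unfold Qp
          exact Finset.sum_congr rfl fun s _ => by
            by_cases h : (P₁ fun k => pos x s k) ∧ (P₂ fun u => pos x s (a + u)) <;>
              simp [h]
        rw [lhs_eq]
        exact (Fintype.sum_equiv (joinEquiv (d := d) a b) _ _ (fun pr => rfl)).symm
    _ = ∑ s₁ : Fin a → Step d, ∑ s₂ : Fin b → Step d,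
          (if P₁ (fun k => pos x s₁ k) ∧ P₂ (fun u => pos (pos x s₁ a) s₂ u)
            then ((2 * d : ℝ))⁻¹ ^ a * ((2 * d : ℝ))⁻¹ ^ b else 0) := by
        rw [Fintype.sum_prod_type]
        exact Finset.sum_congr rfl fun s₁ _ => Finset.sum_congr rfl fun s₂ _ =>
          if_congr (key s₁ s₂) (pow_add _ a b) rfl
    _ = ∑ s₁ : Fin a → Step d,
          (if P₁ (fun k => pos x s₁ k) then
            ((2 * d : ℝ))⁻¹ ^ a * Qp d b (pos x s₁ a) P₂ else 0) := by
        apply Finset.sum_congr rfl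
        intro s₁ _
        by_cases h1 : P₁ (fun k => pos x s₁ k)
        · simp only [h1, true_and, if_pos]
          unfold Qp
          rw [Finset.mul_sum]
          exact Finset.sum_congr rfl fun s₂ _ => by
            by_cases h2 : P₂ (fun u => pos (pos x s₁ a) s₂ u) <;> simp [h2]
        · simp only [h1, false_and, if_false]
          exact Finset.sum_eq_zero fun s₂ _ => by simp [h1]

lemma Qp_sum_le {ι : Type*} (N : ℕ) (x : V d) (I : Finset ι)
    (E : ι → (ℕ → V d) → Prop) (F : (ℕ → V d) → Prop)
    (hdisj : ∀ i ∈ I, ∀ j ∈ I, i ≠ j → ∀ p, E i p → E j p → False)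
    (hsub : ∀ i ∈ I, ∀ p, E i p → F p) :
    ∑ i ∈ I, Qp d N x (E i) ≤ Qp d N x F := by
  classical
  unfold Qp
  rw [Finset.sum_comm]
  apply Finset.sum_le_sum
  intro s _
  by_cases hex : ∃ i ∈ I, E i (fun k => pos x s k)
  · obtain ⟨i₀, hi₀, hEi₀⟩ := hex
    rw [Finset.sum_eq_single i₀]
    · rw [if_pos hEi₀, if_pos (hsub i₀ hi₀ _ hEi₀)]
    · intro j hj hne
      exact if_neg fun hc => hdisj j hj i₀ hi₀ hne _ hc hEi₀
    · intro h; exact absurd hi₀ h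
  · push_neg at hex
    rw [Finset.sum_eq_zero fun i hi => if_neg (hex i hi)]
    by_cases hF : F (fun k => pos x s k)
    · rw [if_pos hF]; exact w_nonneg N
    · rw [if_neg hF]

lemma Qp_sum_eq {ι : Type*} (N : ℕ) (x : V d) (I : Finset ι)
    (E : ι → (ℕ → V d) → Prop) (F : (ℕ → V d) → Prop)
    (hdisj : ∀ i ∈ I, ∀ j ∈ I, i ≠ j → ∀ p, E i p → E j p → False)
    (hsub : ∀ i ∈ I, ∀ p, E i p → F p)
    (hcover : ∀ p, F p → ∃ i ∈ I, E i p) :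
    ∑ i ∈ I, Qp d N x (E i) = Qp d N x F := by
  classical
  unfold Qp
  rw [Finset.sum_comm]
  apply Finset.sum_congr rfl
  intro s _
  by_cases hF : F (fun k => pos x s k)
  · obtain ⟨i₀, hi₀, hEi₀⟩ := hcover _ hF
    rw [if_pos hF, Finset.sum_eq_single i₀]
    · rw [if_pos hEi₀]
    · intro j hj hne
      exact if_neg fun hc => hdisj j hj i₀ hi₀ hne _ hc hEi₀
    · intro h; exact absurd hi₀ h
  · rw [if_neg hF, Finset.sum_eq_zero fun i hi =>
      if_neg fun hc => hF (hsub i hi _ hc)]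


open Classical in
lemma pathProb_eq_Qp (x : V d) (N : ℕ) (E : (Fin (N + 1) → V d) → Prop) :
    pathProb d x N E = Qp d N x (fun p => E (fun i : Fin (N + 1) => p (i : ℕ))) := by
  rw [pathProb_eq]
  unfold Qp
  exact Finset.sum_congr rfl fun s _ => by
    by_cases h : E (fun i : Fin (N + 1) => pos x s (i : ℕ)) <;> simp [h]

/-- hit event within horizon `K` -/
def HitP (A : Set (V d)) (K : ℕ) : (ℕ → V d) → Prop := fun p => ∃ k, k ≤ K ∧ p k ∈ A

lemma hitProb_eq (A : Set (V d)) (y : V d) :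
    hitProb d A y = ⨆ N, Qp d N y (HitP A N) := by
  unfold hitProb eventProb
  congr 1
  funext N
  rw [pathProb_eq_Qp]
  apply Qp_congr
  intro p
  constructor
  · rintro ⟨i, hi⟩; exact ⟨(i : ℕ), Nat.lt_succ_iff.mp i.isLt, hi⟩
  · rintro ⟨k, hk, hm⟩; exact ⟨⟨k, Nat.lt_succ_of_le hk⟩, hm⟩

/-- return event within horizon `K` -/
def RetP (A : Set (V d)) (K : ℕ) : (ℕ → V d) → Prop :=
  fun p => ∃ k, 1 ≤ k ∧ k ≤ K ∧ p k ∈ A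

lemma returnProb_eq (A : Set (V d)) (y : V d) :
    returnProb d A y = ⨆ N, Qp d N y (RetP A N) := by
  unfold returnProb eventProb
  congr 1
  funext N
  rw [pathProb_eq_Qp]
  apply Qp_congr
  intro p
  constructor
  · rintro ⟨i, hi0, him⟩
    refine ⟨(i : ℕ), ?_, Nat.lt_succ_iff.mp i.isLt, him⟩
    rcases Nat.eq_zero_or_pos (i : ℕ) with h | h
    · exact absurd (Fin.ext h) hi0
    · exact h
  · rintro ⟨k, h1, hk, hm⟩
    refine ⟨⟨k, Nat.lt_succ_of_le hk⟩, ?_, hm⟩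
    intro hc
    have : k = 0 := by simpa [Fin.ext_iff] using hc
    omega

/-- hit `A₁` then (weakly later) `A₂`, within horizon `K` -/
def HTP (A₁ A₂ : Set (V d)) (K : ℕ) : (ℕ → V d) → Prop :=
  fun p => ∃ m n, m ≤ n ∧ n ≤ K ∧ p m ∈ A₁ ∧ p n ∈ A₂

lemma hitThenProb_eq (A₁ A₂ : Set (V d)) (x : V d) :
    hitThenProb d A₁ A₂ x = ⨆ N, Qp d N x (HTP A₁ A₂ N) := by
  unfold hitThenProb eventProb
  congr 1
  funext N
  rw [pathProb_eq_Qp]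
  apply Qp_congr
  intro p
  constructor
  · rintro ⟨i, j, hij, h1, h2⟩
    exact ⟨(i : ℕ), (j : ℕ), hij, Nat.lt_succ_iff.mp j.isLt, h1, h2⟩
  · rintro ⟨m, n, hmn, hn, h1, h2⟩
    exact ⟨⟨m, Nat.lt_succ_of_le (le_trans hmn hn)⟩, ⟨n, Nat.lt_succ_of_le hn⟩, hmn, h1, h2⟩

lemma heatKernel_eq_Qp (n : ℕ) (y z : V d) :
    heatKernel d n y z = Qp d n y (fun p => p n = z) := by
  unfold heatKernel
  rw [pathProb_eq_Qp]
  apply Qp_congr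
  intro p
  exact Iff.rfl

lemma bddAbove_Qp (hd : 0 < d) (y : V d) (P : ℕ → (ℕ → V d) → Prop) :
    BddAbove (Set.range fun N => Qp d N y (P N)) := by
  refine ⟨1, ?_⟩
  rintro r ⟨N, rfl⟩
  exact Qp_le_one hd N y (P N)

lemma Qp_le_hitProb (hd : 0 < d) (A : Set (V d)) (y : V d) (N : ℕ) :
    Qp d N y (HitP A N) ≤ hitProb d A y := by
  rw [hitProb_eq]
  exact le_ciSup (bddAbove_Qp hd y _) N

lemma Qp_le_returnProb (hd : 0 < d) (A : Set (V d)) (y : V d) (N : ℕ) :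
    Qp d N y (RetP A N) ≤ returnProb d A y := by
  rw [returnProb_eq]
  exact le_ciSup (bddAbove_Qp hd y _) N

lemma returnProb_le_one (hd : 0 < d) (A : Set (V d)) (y : V d) :
    returnProb d A y ≤ 1 := by
  rw [returnProb_eq]
  exact ciSup_le fun N => Qp_le_one hd N y _

lemma hitThenProb_nonneg (A₁ A₂ : Set (V d)) (x : V d) :
    0 ≤ hitThenProb d A₁ A₂ x := by
  rw [hitThenProb_eq]
  exact Real.iSup_nonneg fun N => Qp_nonneg N x _

lemma capacity_nonneg (hd : 0 < d) (A : Finset (V d)) : 0 ≤ capacity d A := by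
  apply Finset.sum_nonneg
  intro z _
  unfold eqMeasure
  by_cases h : z ∈ (↑A : Set (V d))
  · rw [if_pos h]
    have := returnProb_le_one hd (↑A) z
    linarith
  · rw [if_neg h]

lemma capacity_eq (hd : 0 < d) (A : Finset (V d)) :
    capacity d A = ∑ z ∈ A, (1 - returnProb d (↑A) z) := by
  apply Finset.sum_congr rfl
  intro z hz
  unfold eqMeasure
  rw [if_pos (Finset.mem_coe.mpr hz)]

/-- dropping extra time slots does not change the probability of an event
depending only on times `≤ m`. -/
lemma Qp_irrel (hd : 0 < d) (m M : ℕ) (x : V d) (P₁ : (ℕ → V d) → Prop)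
    (hdep : ∀ p q : ℕ → V d, (∀ k, k ≤ m → p k = q k) → P₁ p → P₁ q) :
    Qp d (m + M) x P₁ = Qp d m x P₁ := by
  classical
  have h1 : Qp d (m + M) x P₁
      = Qp d (m + M) x (fun p => P₁ p ∧ (fun _ => True) (fun u => p (m + u))) :=
    Qp_congr fun p => by simp
  rw [h1, Qp_split m M x P₁ (fun _ => True) hdep]
  simp only [Qp_true hd, mul_one]
  unfold Qp
  apply Finset.sum_congr rfl
  intro s₁ _
  by_cases h : P₁ (fun k => pos x s₁ k) <;> simp [h]

lemma Qp_hit_mono (hd : 0 < d) (A : Set (V d)) (y : V d) {K K' : ℕ} (h : K ≤ K') :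
    Qp d K y (HitP A K) ≤ Qp d K' y (HitP A K') := by
  have hdep : ∀ p q : ℕ → V d, (∀ k, k ≤ K → p k = q k) → HitP A K p → HitP A K q := by
    rintro p q hag ⟨k, hk, hm⟩
    exact ⟨k, hk, by rw [← hag k hk]; exact hm⟩
  have e1 : Qp d K y (HitP A K) = Qp d (K + (K' - K)) y (HitP A K) :=
    (Qp_irrel hd K (K' - K) y (HitP A K) hdep).symm
  rw [e1, Qp_cast (Nat.add_sub_cancel' h) y (HitP A K)]
  exact Qp_mono fun p => by rintro ⟨k, hk, hm⟩; exact ⟨k, le_trans hk h, hm⟩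

/-- finite-horizon last-exit lower bound -/
lemma hit_lower (hd : 0 < d) (A : Finset (V d)) (y : V d) (K : ℕ) :
    ∑ z ∈ A, (∑ n ∈ Finset.range K, heatKernel d n y z) * (1 - returnProb d (↑A) z)
      ≤ hitProb d (↑A) y := by
  classical
  set E : ℕ × V d → (ℕ → V d) → Prop := fun nz p =>
    p nz.1 = nz.2 ∧ ∀ k, nz.1 < k → k ≤ K → p k ∉ (↑A : Set (V d)) with hE
  have key : ∀ nz ∈ Finset.range K ×ˢ A,
      heatKernel d nz.1 y nz.2 * (1 - returnProb d (↑A) nz.2) ≤ Qp d K y (E nz) := by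
    rintro ⟨n, z⟩ hnz
    rw [Finset.mem_product, Finset.mem_range] at hnz
    obtain ⟨hn, hz⟩ := hnz
    have hcast : Qp d K y (E (n, z)) = Qp d (n + (K - n)) y (E (n, z)) :=
      Qp_cast (Nat.add_sub_cancel' (le_of_lt hn)).symm y _
    have hdep : ∀ p q : ℕ → V d, (∀ k, k ≤ n → p k = q k) →
        ((fun q : ℕ → V d => q n = z) p) → ((fun q : ℕ → V d => q n = z) q) := by
      intro p q hag h1
      rw [← hag n le_rfl]; exact h1
    have hsplit := Qp_split n (K - n) y (fun q : ℕ → V d => q n = z)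
      (fun q => ∀ u, 1 ≤ u → u ≤ K - n → q u ∉ (↑A : Set (V d))) hdep
    have hsplit' : Qp d (n + (K - n)) y
          (fun p => (fun q : ℕ → V d => q n = z) p ∧
            (fun q => ∀ u, 1 ≤ u → u ≤ K - n → q u ∉ (↑A : Set (V d)))
              (fun u => p (n + u)))
        = ∑ s₁ : Fin n → Step d,
          if pos y s₁ n = z then
            ((2 * d : ℝ))⁻¹ ^ n * Qp d (K - n) (pos y s₁ n)
              (fun q => ∀ u, 1 ≤ u → u ≤ K - n → q u ∉ (↑A : Set (V d))) else 0 := by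
      refine hsplit.trans ?_
      exact Finset.sum_congr rfl fun s₁ _ => by
        by_cases h : pos y s₁ n = z <;> simp [h]
    have hcongr : Qp d (n + (K - n)) y (E (n, z))
        = ∑ s₁ : Fin n → Step d,
          if pos y s₁ n = z then
            ((2 * d : ℝ))⁻¹ ^ n * Qp d (K - n) (pos y s₁ n)
              (fun q => ∀ u, 1 ≤ u → u ≤ K - n → q u ∉ (↑A : Set (V d))) else 0 := by
      refine Eq.trans (Qp_congr ?_) hsplit'
      intro p
      simp only [hE]
      constructor
      · rintro ⟨h1, h2⟩
        exact ⟨h1, fun u hu1 hu2 => h2 (n + u) (by omega) (by omega)⟩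
      · rintro ⟨h1, h2⟩
        refine ⟨h1, fun k hk1 hk2 => ?_⟩
        have hk : n + (k - n) = k := by omega
        have h3 : p (n + (k - n)) ∉ (↑A : Set (V d)) := h2 (k - n) (by omega) (by omega)
        rwa [hk] at h3
    rw [hcast, hcongr]
    have havoid : ∀ v : V d,
        1 - returnProb d (↑A) v ≤ Qp d (K - n) v
          (fun q => ∀ u, 1 ≤ u → u ≤ K - n → q u ∉ (↑A : Set (V d))) := by
      intro v
      rw [Qp_compl hd]
      have : Qp d (K - n) v
          (fun p => ¬ ∀ u, 1 ≤ u → u ≤ K - n → p u ∉ (↑A : Set (V d)))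
          ≤ returnProb d (↑A) v := by
        refine le_trans (Qp_mono ?_) (Qp_le_returnProb hd (↑A) v (K - n))
        intro p hp
        push_neg at hp
        obtain ⟨u, h1, h2, h3⟩ := hp
        exact ⟨u, h1, h2, h3⟩
      linarith
    calc heatKernel d n y z * (1 - returnProb d (↑A) z)
        = (1 - returnProb d (↑A) z) * Qp d n y (fun p => p n = z) := by
          rw [heatKernel_eq_Qp]; ring
      _ ≤ ∑ s₁ : Fin n → Step d,
          if pos y s₁ n = z then
            ((2 * d : ℝ))⁻¹ ^ n * Qp d (K - n) (pos y s₁ n)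
              (fun q => ∀ u, 1 ≤ u → u ≤ K - n → q u ∉ (↑A : Set (V d))) else 0 := by
          unfold Qp
          rw [Finset.mul_sum]
          apply Finset.sum_le_sum
          intro s₁ _
          by_cases h : pos y s₁ n = z
          · rw [if_pos h, if_pos h, h]
            rw [mul_comm (1 - returnProb d (↑A) z)]
            apply mul_le_mul_of_nonneg_left (havoid z) (w_nonneg n)
          · rw [if_neg h, if_neg h, mul_zero]
    -- the last `calc` step target is exactly the RHS of Qp_split
  have disj : ∀ nz ∈ Finset.range K ×ˢ A, ∀ nz' ∈ Finset.range K ×ˢ A,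
      nz ≠ nz' → ∀ p, E nz p → E nz' p → False := by
    rintro ⟨n, z⟩ hnz ⟨n', z'⟩ hnz' hne p ⟨h1, h2⟩ ⟨h1', h2'⟩
    rw [Finset.mem_product, Finset.mem_range] at hnz hnz'
    have h1c : p n = z := h1
    have h2c : ∀ k, n < k → k ≤ K → p k ∉ (↑A : Set (V d)) := h2
    have h1c' : p n' = z' := h1'
    have h2c' : ∀ k, n' < k → k ≤ K → p k ∉ (↑A : Set (V d)) := h2'
    have hmemz : z ∈ A := hnz.2
    have hmemz' : z' ∈ A := hnz'.2
    rcases lt_trichotomy n n' with h | h | h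
    · exact h2c n' h (by omega) (by rw [h1c']; exact Finset.mem_coe.mpr hmemz')
    · apply hne
      have hz : z = z' := by rw [← h1c, ← h1c', h]
      rw [h, hz]
    · exact h2c' n h (by omega) (by rw [h1c]; exact Finset.mem_coe.mpr hmemz)
  have hsub : ∀ nz ∈ Finset.range K ×ˢ A, ∀ p, E nz p → HitP (↑A) K p := by
    rintro ⟨n, z⟩ hnz p ⟨h1, _⟩
    rw [Finset.mem_product, Finset.mem_range] at hnz
    have h1c : p n = z := h1
    exact ⟨n, by omega, by rw [h1c]; exact Finset.mem_coe.mpr hnz.2⟩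
  calc ∑ z ∈ A, (∑ n ∈ Finset.range K, heatKernel d n y z) * (1 - returnProb d (↑A) z)
      = ∑ nz ∈ Finset.range K ×ˢ A, heatKernel d nz.1 y nz.2 * (1 - returnProb d (↑A) nz.2) := by
        rw [Finset.sum_product_right]
        apply Finset.sum_congr rfl
        intro z _
        rw [Finset.sum_mul]
    _ ≤ ∑ nz ∈ Finset.range K ×ˢ A, Qp d K y (E nz) := Finset.sum_le_sum key
    _ ≤ Qp d K y (HitP (↑A) K) := Qp_sum_le K y _ E (HitP (↑A) K) disj hsub
    _ ≤ hitProb d (↑A) y := Qp_le_hitProb hd (↑A) y K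

/-- `β cap(A) ≤ P_y[H_A < ∞]` when the Green function from `y` to points of
`A` is bounded below by `β`. -/
lemma cap_le_hitProb (hd : 0 < d) (A : Finset (V d)) (y : V d) (β : ℝ) (hβ : 0 < β)
    (hgA : ∀ z ∈ A, β ≤ green d y z) :
    β * capacity d A ≤ hitProb d (↑A) y := by
  classical
  have hsummable : ∀ z ∈ A, Summable fun n => heatKernel d n y z := by
    intro z hz
    by_contra hs
    have h0 : green d y z = 0 := tsum_eq_zero_of_not_summable hs
    have hb := hgA z hz
    rw [h0] at hb
    linarith
  have htend : Filter.Tendsto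
      (fun K => ∑ z ∈ A,
        (∑ n ∈ Finset.range K, heatKernel d n y z) * (1 - returnProb d (↑A) z))
      Filter.atTop
      (nhds (∑ z ∈ A, green d y z * (1 - returnProb d (↑A) z))) := by
    apply tendsto_finset_sum
    intro z hz
    exact ((hsummable z hz).hasSum.tendsto_sum_nat).mul_const _
  have hlim : ∑ z ∈ A, green d y z * (1 - returnProb d (↑A) z) ≤ hitProb d (↑A) y :=
    le_of_tendsto' htend fun K => hit_lower hd A y K
  calc β * capacity d A
      = ∑ z ∈ A, β * (1 - returnProb d (↑A) z) := by
        rw [capacity_eq hd, Finset.mul_sum]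
    _ ≤ ∑ z ∈ A, green d y z * (1 - returnProb d (↑A) z) := by
        apply Finset.sum_le_sum
        intro z hz
        have h1 : 0 ≤ 1 - returnProb d (↑A) z := by
          have := returnProb_le_one hd (↑A) z
          linarith
        exact mul_le_mul_of_nonneg_right (hgA z hz) h1
    _ ≤ hitProb d (↑A) y := hlim

/-- first-entrance predicate: first visit to `A` occurs at time `m`, at `y`. -/
def FHP (A : Set (V d)) (m : ℕ) (y : V d) : (ℕ → V d) → Prop :=
  fun p => p m = y ∧ ∀ k, k < m → p k ∉ A

lemma FHP_dep (A : Set (V d)) (m : ℕ) (y : V d) :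
    ∀ p q : ℕ → V d, (∀ k, k ≤ m → p k = q k) → FHP A m y p → FHP A m y q := by
  rintro p q hag ⟨h1, h2⟩
  constructor
  · rw [← hag m le_rfl]; exact h1
  · intro k hk
    rw [← hag k (le_of_lt hk)]
    exact h2 k hk

lemma FHP_disj (A : Finset (V d)) (K : ℕ) :
    ∀ my ∈ Finset.range (K + 1) ×ˢ A, ∀ my' ∈ Finset.range (K + 1) ×ˢ A,
      my ≠ my' → ∀ p : ℕ → V d,
        FHP (↑A) my.1 my.2 p → FHP (↑A) my'.1 my'.2 p → False := by
  rintro ⟨m, y⟩ hmy ⟨m', y'⟩ hmy' hne p ⟨h1, h2⟩ ⟨h1', h2'⟩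
  have h1c : p m = y := h1
  have h2c : ∀ k, k < m → p k ∉ (↑A : Set (V d)) := h2
  have h1c' : p m' = y' := h1'
  have h2c' : ∀ k, k < m' → p k ∉ (↑A : Set (V d)) := h2'
  have hmemy : y ∈ A := (Finset.mem_product.mp hmy).2
  have hmemy' : y' ∈ A := (Finset.mem_product.mp hmy').2
  rcases lt_trichotomy m m' with h | h | h
  · exact h2c' m h (by rw [h1c]; exact Finset.mem_coe.mpr hmemy)
  · apply hne
    have hy : y = y' := by rw [← h1c, ← h1c', h]
    rw [h, hy]
  · exact h2c m' h (by rw [h1c']; exact Finset.mem_coe.mpr hmemy')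

/-- horizon-independent value of the first-entrance event -/
lemma Qp_FHP (hd : 0 < d) (A : Finset (V d)) (x y : V d) {m K : ℕ} (hm : m ≤ K) :
    Qp d K x (FHP (↑A) m y) = Qp d m x (FHP (↑A) m y) := by
  rw [Qp_cast (Nat.add_sub_cancel' hm).symm x (FHP (↑A) m y)]
  exact Qp_irrel hd m (K - m) x _ (FHP_dep (↑A) m y)

lemma HitP_dep (A : Set (V d)) (K : ℕ) :
    ∀ p q : ℕ → V d, (∀ k, k ≤ K → p k = q k) → HitP A K p → HitP A K q := by
  rintro p q hag ⟨k, hk, hm⟩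
  exact ⟨k, hk, by rw [← hag k hk]; exact hm⟩

/-- first-entrance decomposition -/
lemma first_entrance (hd : 0 < d) (A : Finset (V d)) (x : V d) (K : ℕ) :
    Qp d K x (HitP (↑A) K)
      = ∑ my ∈ Finset.range (K + 1) ×ˢ A, Qp d my.1 x (FHP (↑A) my.1 my.2) := by
  classical
  have hsub : ∀ my ∈ Finset.range (K + 1) ×ˢ A, ∀ p : ℕ → V d,
      FHP (↑A) my.1 my.2 p → HitP (↑A) K p := by
    rintro ⟨m, y⟩ hmy p ⟨h1, _⟩
    rw [Finset.mem_product, Finset.mem_range] at hmy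
    have h1c : p m = y := h1
    exact ⟨m, by omega, by rw [h1c]; exact Finset.mem_coe.mpr hmy.2⟩
  have hcover : ∀ p : ℕ → V d, HitP (↑A) K p →
      ∃ my ∈ Finset.range (K + 1) ×ˢ A, FHP (↑A) my.1 my.2 p := by
    intro p hp
    have hp' : ∃ k, k ≤ K ∧ p k ∈ (↑A : Set (V d)) := hp
    set m := Nat.find hp' with hmdef
    have hspec := Nat.find_spec hp'
    refine ⟨(m, p m), ?_, rfl, ?_⟩
    · rw [Finset.mem_product, Finset.mem_range]
      exact ⟨by omega, Finset.mem_coe.mp hspec.2⟩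
    · intro k hk hmem
      exact Nat.find_min hp' hk ⟨by omega, hmem⟩
  rw [← Qp_sum_eq K x (Finset.range (K + 1) ×ˢ A)
    (fun my => FHP (↑A) my.1 my.2) (HitP (↑A) K) (FHP_disj A K) hsub hcover]
  apply Finset.sum_congr rfl
  rintro ⟨m, y⟩ hmy
  rw [Finset.mem_product, Finset.mem_range] at hmy
  exact Qp_FHP hd A x y (by omega)

/-- strong Markov lower bound: hit `A₁` for the first time at `(m, y)`, then
hit `A₂` within `K` more steps. -/
lemma main_split (hd : 0 < d) (A₁ A₂ : Finset (V d)) (x : V d) (K : ℕ) :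
    ∑ my ∈ Finset.range (K + 1) ×ˢ A₁,
        Qp d my.1 x (FHP (↑A₁) my.1 my.2) * Qp d K my.2 (HitP (↑A₂) K)
      ≤ Qp d (2 * K) x (HTP (↑A₁) (↑A₂) (2 * K)) := by
  classical
  set E : ℕ × V d → (ℕ → V d) → Prop := fun my p =>
    FHP (↑A₁) my.1 my.2 p ∧ HitP (↑A₂) K (fun u => p (my.1 + u)) with hE
  have key : ∀ my ∈ Finset.range (K + 1) ×ˢ A₁,
      Qp d my.1 x (FHP (↑A₁) my.1 my.2) * Qp d K my.2 (HitP (↑A₂) K)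
        = Qp d (2 * K) x (E my) := by
    rintro ⟨m, y⟩ hmy
    rw [Finset.mem_product, Finset.mem_range] at hmy
    have hm : m ≤ K := by omega
    have hQ : ∀ v : V d, Qp d (2 * K - m) v (HitP (↑A₂) K) = Qp d K v (HitP (↑A₂) K) := by
      intro v
      rw [Qp_cast (show 2 * K - m = K + (K - m) by omega) v _]
      exact Qp_irrel hd K (K - m) v _ (HitP_dep ((A₂ : Finset (V d)) : Set (V d)) K)
    symm
    calc Qp d (2 * K) x (E (m, y))
        = Qp d (m + (2 * K - m)) x (E (m, y)) :=
          Qp_cast (Nat.add_sub_cancel' (by omega)).symm x _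
      _ = Qp d (m + (2 * K - m)) x
            (fun p => FHP (↑A₁) m y p ∧ HitP (↑A₂) K (fun u => p (m + u))) :=
          Qp_congr fun p => Iff.rfl
      _ = ∑ s₁ : Fin m → Step d,
            if FHP (↑A₁) m y (fun k => pos x s₁ k) then
              ((2 * d : ℝ))⁻¹ ^ m * Qp d (2 * K - m) (pos x s₁ m) (HitP (↑A₂) K)
            else 0 :=
          Qp_split m (2 * K - m) x _ _ (FHP_dep (↑A₁) m y)
      _ = ∑ s₁ : Fin m → Step d,
            Qp d K y (HitP (↑A₂) K) *
              (if FHP (↑A₁) m y (fun k => pos x s₁ k) then ((2 * d : ℝ))⁻¹ ^ m else 0) := by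
          apply Finset.sum_congr rfl
          intro s₁ _
          by_cases h : FHP (↑A₁) m y (fun k => pos x s₁ k)
          · rw [if_pos h, if_pos h]
            have hy : pos x s₁ m = y := h.1
            rw [hy, hQ y]
            ring
          · rw [if_neg h, if_neg h, mul_zero]
      _ = Qp d K y (HitP (↑A₂) K) * Qp d m x (FHP (↑A₁) m y) := by
          rw [← Finset.mul_sum]
          congr 1
      _ = Qp d m x (FHP (↑A₁) m y) * Qp d K y (HitP (↑A₂) K) := mul_comm _ _
  have hdisj : ∀ my ∈ Finset.range (K + 1) ×ˢ A₁, ∀ my' ∈ Finset.range (K + 1) ×ˢ A₁,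
      my ≠ my' → ∀ p, E my p → E my' p → False := by
    intro my hmy my' hmy' hne p hp hp'
    exact FHP_disj A₁ K my hmy my' hmy' hne p hp.1 hp'.1
  have hsub : ∀ my ∈ Finset.range (K + 1) ×ˢ A₁, ∀ p,
      E my p → HTP (↑A₁) (↑A₂) (2 * K) p := by
    rintro ⟨m, y⟩ hmy p ⟨⟨h1, _⟩, u, hu, humem⟩
    rw [Finset.mem_product, Finset.mem_range] at hmy
    have h1c : p m = y := h1
    have humem' : p (m + u) ∈ (↑A₂ : Set (V d)) := humem
    refine ⟨m, m + u, by omega, by omega, ?_, humem'⟩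
    rw [h1c]; exact Finset.mem_coe.mpr hmy.2
  calc ∑ my ∈ Finset.range (K + 1) ×ˢ A₁,
        Qp d my.1 x (FHP (↑A₁) my.1 my.2) * Qp d K my.2 (HitP (↑A₂) K)
      = ∑ my ∈ Finset.range (K + 1) ×ˢ A₁, Qp d (2 * K) x (E my) :=
        Finset.sum_congr rfl key
    _ ≤ Qp d (2 * K) x (HTP (↑A₁) (↑A₂) (2 * K)) :=
        Qp_sum_le (2 * K) x _ E _ hdisj hsub

end SRWaux

/-- Equation (3.21) of the paper: if `A₁, A₂, A₃` are finite subsets of `ℤ^d`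
contained in the ball `B(0,cR)` on which the Green's function is bounded below
by `c₀ R^{2-d}`, then for every `x ∈ A₃`, the probability that SRW started at
`x` hits `A₁` and afterwards hits `A₂` is at least
`c₀² R^{2(2-d)} cap(A₁) cap(A₂)`. -/
theorem stmt_11 (d : ℕ) (hd : 5 ≤ d) (A₁ A₂ A₃ : Finset (Fin d → ℤ))
    (c c₀ R : ℝ) (hc : 0 < c) (hc₀ : 0 < c₀) (hR : 0 < R)
    (hA : ∀ y : Fin d → ℤ, (y ∈ A₁ ∨ y ∈ A₂ ∨ y ∈ A₃) → (latZ y 0 : ℝ) ≤ c * R)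
    (hg : ∀ y z : Fin d → ℤ, (latZ y 0 : ℝ) ≤ c * R → (latZ z 0 : ℝ) ≤ c * R →
      c₀ * R ^ ((2 : ℝ) - d) ≤ green d y z) :
    ∀ x ∈ A₃,
      c₀ ^ 2 * R ^ (2 * ((2 : ℝ) - d)) * capacity d A₁ * capacity d A₂
        ≤ hitThenProb d (↑A₁) (↑A₂) x := by
  classical
  intro x hx
  have hd0 : 0 < d := by omega
  set β : ℝ := c₀ * R ^ ((2 : ℝ) - d) with hβdef
  have hβ : 0 < β := mul_pos hc₀ (Real.rpow_pos_of_pos hR _)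
  have htarget : c₀ ^ 2 * R ^ (2 * ((2 : ℝ) - d)) * capacity d A₁ * capacity d A₂
      = (β * capacity d A₁) * (β * capacity d A₂) := by
    have h2 : R ^ (2 * ((2 : ℝ) - d)) = (R ^ ((2 : ℝ) - d)) ^ (2 : ℕ) := by
      rw [mul_comm, Real.rpow_mul hR.le]
      rw [show ((2 : ℝ)) = ((2 : ℕ) : ℝ) by norm_num, Real.rpow_natCast]
    rw [h2, hβdef]
    ring
  rw [htarget]
  set a := β * capacity d A₁ with hadef
  set b := β * capacity d A₂ with hbdef
  have hxball : ((latZ x 0 : ℤ) : ℝ) ≤ c * R := hA x (Or.inr (Or.inr hx))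
  have ha : a ≤ hitProb d (↑A₁) x :=
    SRWaux.cap_le_hitProb hd0 A₁ x β hβ
      (fun z hz => hg x z hxball (hA z (Or.inl hz)))
  have hb : ∀ y ∈ A₁, b ≤ hitProb d (↑A₂) y := fun y hy =>
    SRWaux.cap_le_hitProb hd0 A₂ y β hβ
      (fun z hz => hg y z (hA y (Or.inl hy)) (hA z (Or.inr (Or.inl hz))))
  have hca : 0 ≤ capacity d A₁ := SRWaux.capacity_nonneg hd0 A₁
  have hcb : 0 ≤ capacity d A₂ := SRWaux.capacity_nonneg hd0 A₂
  have hH0 : 0 ≤ hitThenProb d (↑A₁) (↑A₂) x := SRWaux.hitThenProb_nonneg _ _ x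
  have ha0 : 0 ≤ a := mul_nonneg hβ.le hca
  have hb0 : 0 ≤ b := mul_nonneg hβ.le hcb
  have main : ∀ ε : ℝ, 0 < ε → ε < min a b →
      (a - ε) * (b - ε) ≤ hitThenProb d (↑A₁) (↑A₂) x := by
    intro ε hε hεm
    have hεa : ε < a := lt_of_lt_of_le hεm (min_le_left a b)
    have hεb : ε < b := lt_of_lt_of_le hεm (min_le_right a b)
    have h1 : a - ε < ⨆ N, SRWaux.Qp d N x (SRWaux.HitP (↑A₁) N) := by
      rw [← SRWaux.hitProb_eq]
      linarith
    obtain ⟨K₁, hK₁⟩ := exists_lt_of_lt_ciSup h1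
    have h2 : ∀ y : Fin d → ℤ, ∃ Ky : ℕ, y ∈ A₁ →
        b - ε < SRWaux.Qp d Ky y (SRWaux.HitP (↑A₂) Ky) := by
      intro y
      by_cases hy : y ∈ A₁
      · have hby : b - ε < ⨆ N, SRWaux.Qp d N y (SRWaux.HitP (↑A₂) N) := by
          rw [← SRWaux.hitProb_eq]
          linarith [hb y hy]
        obtain ⟨Ky, hKy⟩ := exists_lt_of_lt_ciSup hby
        exact ⟨Ky, fun _ => hKy⟩
      · exact ⟨0, fun h => absurd h hy⟩
    choose f hf using h2
    set K := max K₁ (A₁.sup f) with hKdef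
    have hKx : a - ε ≤ SRWaux.Qp d K x (SRWaux.HitP (↑A₁) K) :=
      le_of_lt (lt_of_lt_of_le hK₁ (SRWaux.Qp_hit_mono hd0 _ x (le_max_left _ _)))
    have hKy : ∀ y ∈ A₁, b - ε ≤ SRWaux.Qp d K y (SRWaux.HitP (↑A₂) K) := fun y hy =>
      le_of_lt (lt_of_lt_of_le (hf y hy)
        (SRWaux.Qp_hit_mono hd0 _ y (le_trans (Finset.le_sup hy) (le_max_right _ _))))
    have step : (a - ε) * (b - ε)
        ≤ SRWaux.Qp d (2 * K) x (SRWaux.HTP (↑A₁) (↑A₂) (2 * K)) := by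
      calc (a - ε) * (b - ε)
          ≤ SRWaux.Qp d K x (SRWaux.HitP (↑A₁) K) * (b - ε) :=
            mul_le_mul_of_nonneg_right hKx (by linarith)
        _ = ∑ my ∈ Finset.range (K + 1) ×ˢ A₁,
              SRWaux.Qp d my.1 x (SRWaux.FHP (↑A₁) my.1 my.2) * (b - ε) := by
            rw [SRWaux.first_entrance hd0, Finset.sum_mul]
        _ ≤ ∑ my ∈ Finset.range (K + 1) ×ˢ A₁,
              SRWaux.Qp d my.1 x (SRWaux.FHP (↑A₁) my.1 my.2) *
                SRWaux.Qp d K my.2 (SRWaux.HitP (↑A₂) K) := by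
            apply Finset.sum_le_sum
            intro my hmy
            exact mul_le_mul_of_nonneg_left
              (hKy my.2 (Finset.mem_product.mp hmy).2) (SRWaux.Qp_nonneg _ _ _)
        _ ≤ SRWaux.Qp d (2 * K) x (SRWaux.HTP (↑A₁) (↑A₂) (2 * K)) :=
            SRWaux.main_split hd0 A₁ A₂ x K
    refine le_trans step ?_
    rw [SRWaux.hitThenProb_eq]
    exact le_ciSup (SRWaux.bddAbove_Qp hd0 x _) (2 * K)
  by_cases hab : 0 < min a b
  · set cε := min a b / 2 with hcdef
    have hc : 0 < cε := by positivity
    have hdenom : Filter.Tendsto (fun n : ℕ => (n : ℝ) + 1) Filter.atTop Filter.atTop :=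
      Filter.tendsto_atTop_add_const_right _ 1 tendsto_natCast_atTop_atTop
    have h0 : Filter.Tendsto (fun n : ℕ => cε / ((n : ℝ) + 1)) Filter.atTop (nhds 0) :=
      Filter.Tendsto.div_atTop tendsto_const_nhds hdenom
    have hT : Filter.Tendsto
        (fun n : ℕ => (a - cε / ((n : ℝ) + 1)) * (b - cε / ((n : ℝ) + 1)))
        Filter.atTop (nhds (a * b)) := by
      have := (tendsto_const_nhds (x := a) (f := Filter.atTop (α := ℕ))).sub h0 |>.mul
        ((tendsto_const_nhds (x := b) (f := Filter.atTop (α := ℕ))).sub h0)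
      simpa using this
    refine le_of_tendsto' hT ?_
    intro n
    apply main
    · positivity
    · have h1 : cε / ((n : ℝ) + 1) ≤ cε := by
        apply div_le_self hc.le
        have : (0 : ℝ) ≤ (n : ℝ) := Nat.cast_nonneg n
        linarith
      have h2 : cε < min a b := by
        rw [hcdef]
        linarith
      linarith
  · push_neg at hab
    have hmin : min a b = 0 := le_antisymm hab (le_min ha0 hb0)
    have : a = 0 ∨ b = 0 := by
      rcases le_total a b with h | h
      · left; rw [min_eq_left h] at hmin; exact hmin
      · right; rw [min_eq_right h] at hmin; exact hmin
    rcases this with h | h <;> rw [h] <;> simpa using hH0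
end
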